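/- arXiv:1904.12154 — 3 statements merged into one kernel-verified Lean document; each statement's English description precedes it below -/
import Mathlib

section
/- Let m ≥ 3. The full third-order estimator c₃⁽ᵃ⁾ = (m²/((m−1)(m−2))) · (1/m)∑ⱼ (Xⱼ − X̄)(Yⱼ − Ȳ)(Zⱼ − Z̄) is an unbiased estimator of the third multivariate cumulant: 𝔼[c₃⁽ᵃ⁾] = 𝔼[XYZ] − 𝔼[XY]𝔼[Z] − 𝔼[XZ]𝔼[Y] − 𝔼[YZ]𝔼[X] + 2𝔼[X]𝔼[Y]𝔼[Z]. -/
open Finset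

lemma sum_ite_one {m : ℕ} (j : Fin m) (A B : ℝ) :
    ∑ k : Fin m, (if j = k then A else B) = A + ((m:ℝ)-1)*B := by
  have : ∀ k : Fin m, (if j = k then A else B) = B + (if j = k then A - B else 0) := by
    intro k; by_cases h : j = k <;> simp [h]
  simp only [this, Finset.sum_add_distrib, Finset.sum_const, Finset.card_univ, Fintype.card_fin,
    nsmul_eq_mul, Finset.sum_ite_eq, Finset.mem_univ, if_pos]
  ring

lemma sum_ite_two {m : ℕ} {j k : Fin m} (hjk : j ≠ k) (C D E : ℝ) :
    ∑ l : Fin m, (if j = l then C else if k = l then D else E) = C + D + ((m:ℝ)-2)*E := by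
  have : ∀ l : Fin m, (if j = l then C else if k = l then D else E)
      = E + (if j = l then C - E else 0) + (if k = l then D - E else 0) := by
    intro l
    rcases eq_or_ne j l with h | h
    · subst h; simp [hjk, Ne.symm hjk]
    · rcases eq_or_ne k l with h2 | h2 <;> simp [h, h2]
  simp only [this, Finset.sum_add_distrib, Finset.sum_const, Finset.card_univ, Fintype.card_fin,
    nsmul_eq_mul, Finset.sum_ite_eq, Finset.mem_univ, if_pos]
  ring

lemma key_sum {m : ℕ} (hm : (m:ℝ) ≠ 0) (a b c : Fin m → ℝ) :
    ∑ j, (a j - (m:ℝ)⁻¹ * ∑ i, a i) * (b j - (m:ℝ)⁻¹ * ∑ i, b i) * (c j - (m:ℝ)⁻¹ * ∑ i, c i)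
    = (∑ j, a j * b j * c j)
      - (m:ℝ)⁻¹ * (∑ j, ∑ k, (a j * b j * c k + a j * b k * c j + a k * b j * c j))
      + 2 * ((m:ℝ)⁻¹)^2 * (∑ j, ∑ k, ∑ l, a j * b k * c l) := by
  have e1 : (∑ j, ∑ k, (a j * b j * c k + a j * b k * c j + a k * b j * c j))
      = (∑ j, a j * b j) * (∑ i, c i) + (∑ i, b i) * (∑ j, a j * c j)
        + (∑ i, a i) * (∑ j, b j * c j) := by
    simp only [Finset.sum_add_distrib]
    congr 1; congr 1
    · calc ∑ j, ∑ k, a j * b j * c k = ∑ j, (a j * b j) * ∑ i, c i :=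
            Finset.sum_congr rfl fun j _ => (Finset.mul_sum _ _ _).symm
        _ = (∑ j, a j * b j) * ∑ i, c i := by rw [← Finset.sum_mul]
    · calc ∑ j, ∑ k, a j * b k * c j = ∑ j, (∑ i, b i) * (a j * c j) := by
            refine Finset.sum_congr rfl fun j _ => ?_
            rw [Finset.sum_mul]
            exact Finset.sum_congr rfl fun k _ => by ring
        _ = (∑ i, b i) * ∑ j, a j * c j := by rw [← Finset.mul_sum]
    · calc ∑ j, ∑ k, a k * b j * c j = ∑ j, (∑ i, a i) * (b j * c j) := by
            refine Finset.sum_congr rfl fun j _ => ?_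
            rw [Finset.sum_mul]
            exact Finset.sum_congr rfl fun k _ => by ring
        _ = (∑ i, a i) * ∑ j, b j * c j := by rw [← Finset.mul_sum]
  have e2 : (∑ j, ∑ k, ∑ l, a j * b k * c l)
      = (∑ i, a i) * (∑ i, b i) * (∑ i, c i) := by
    calc ∑ j, ∑ k, ∑ l, a j * b k * c l
        = ∑ j, ∑ k, (a j * b k) * ∑ i, c i :=
          Finset.sum_congr rfl fun j _ => Finset.sum_congr rfl fun k _ => (Finset.mul_sum _ _ _).symm
      _ = ∑ j, (a j * ∑ i, b i) * ∑ i, c i := by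
          refine Finset.sum_congr rfl fun j _ => ?_
          rw [← Finset.sum_mul, ← Finset.mul_sum]
      _ = (∑ i, a i) * (∑ i, b i) * (∑ i, c i) := by rw [← Finset.sum_mul, ← Finset.sum_mul]
  rw [e1, e2]
  have expand : ∀ j : Fin m, (a j - (m:ℝ)⁻¹ * ∑ i, a i) * (b j - (m:ℝ)⁻¹ * ∑ i, b i) * (c j - (m:ℝ)⁻¹ * ∑ i, c i)
      = a j * b j * c j
        - (m:ℝ)⁻¹ * ((∑ i, c i) * (a j * b j) + (∑ i, b i) * (a j * c j) + (∑ i, a i) * (b j * c j))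
        + ((m:ℝ)⁻¹)^2 * (((∑ i, b i) * (∑ i, c i)) * a j + ((∑ i, a i) * (∑ i, c i)) * b j
          + ((∑ i, a i) * (∑ i, b i)) * c j)
        - ((m:ℝ)⁻¹)^3 * ((∑ i, a i) * (∑ i, b i) * (∑ i, c i)) := fun j => by ring
  rw [Finset.sum_congr rfl fun j _ => expand j]
  simp only [Finset.sum_sub_distrib, Finset.sum_add_distrib, ← Finset.mul_sum,
    Finset.sum_const, Finset.card_univ, Fintype.card_fin, nsmul_eq_mul]
  field_simp
  ring

open MeasureTheory ProbabilityTheory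
open scoped ENNReal

theorem unbiased_c3_full {Ω : Type*} [MeasurableSpace Ω] (μ : Measure Ω) [IsProbabilityMeasure μ]
    (m : ℕ) (hm : 3 ≤ m)
    (X Y Z : Fin m → Ω → ℝ)
    (hXmeas : ∀ i, Measurable (X i))
    (hYmeas : ∀ i, Measurable (Y i))
    (hZmeas : ∀ i, Measurable (Z i))
    (hindep : iIndepFun (fun i ω => (X i ω, Y i ω, Z i ω)) μ)
    (hident : ∀ i, IdentDistrib (fun ω => (X i ω, Y i ω, Z i ω)) (fun ω => (X ⟨0, by omega⟩ ω, Y ⟨0, by omega⟩ ω, Z ⟨0, by omega⟩ ω)) μ μ)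
    (hX3 : MemLp (X ⟨0, by omega⟩) 3 μ)
    (hY3 : MemLp (Y ⟨0, by omega⟩) 3 μ)
    (hZ3 : MemLp (Z ⟨0, by omega⟩) 3 μ) :
    (∫ ω, ((m:ℝ)^2 / (((m:ℝ)-1) * ((m:ℝ)-2))) * ((m:ℝ)⁻¹ * ∑ j, (X j ω - ((m:ℝ)⁻¹ * ∑ i, X i ω)) * (Y j ω - ((m:ℝ)⁻¹ * ∑ i, Y i ω)) * (Z j ω - ((m:ℝ)⁻¹ * ∑ i, Z i ω))) ∂μ) =
      (∫ ω, X ⟨0, by omega⟩ ω * Y ⟨0, by omega⟩ ω * Z ⟨0, by omega⟩ ω ∂μ) - (∫ ω, X ⟨0, by omega⟩ ω * Y ⟨0, by omega⟩ ω ∂μ) * (∫ ω, Z ⟨0, by omega⟩ ω ∂μ) - (∫ ω, X ⟨0, by omega⟩ ω * Z ⟨0, by omega⟩ ω ∂μ) * (∫ ω, Y ⟨0, by omega⟩ ω ∂μ) - (∫ ω, Y ⟨0, by omega⟩ ω * Z ⟨0, by omega⟩ ω ∂μ) * (∫ ω, X ⟨0, by omega⟩ ω ∂μ) + 2 * (∫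 ω, X ⟨0, by omega⟩ ω ∂μ) * (∫ ω, Y ⟨0, by omega⟩ ω ∂μ) * (∫ ω, Z ⟨0, by omega⟩ ω ∂μ) := by
  have hm3 : (3:ℝ) ≤ (m:ℝ) := by exact_mod_cast hm
  have hm0 : (m:ℝ) ≠ 0 := by linarith
  have hm1 : (m:ℝ) - 1 ≠ 0 := by linarith
  have hm2 : (m:ℝ) - 2 ≠ 0 := by linarith
  set i0 : Fin m := ⟨0, by omega⟩ with hi0
  -- measurability of the vectors
  set V : Fin m → Ω → ℝ × ℝ × ℝ := fun i ω => (X i ω, Y i ω, Z i ω) with hV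
  have hVmeas : ∀ i, Measurable (V i) := fun i =>
    (hXmeas i).prodMk ((hYmeas i).prodMk (hZmeas i))
  -- transfer of MemLp
  have hX3' : ∀ i, MemLp (X i) 3 μ := fun i =>
    (((hident i).comp measurable_fst).symm.memLp_snd hX3)
  have hY3' : ∀ i, MemLp (Y i) 3 μ := fun i =>
    (((hident i).comp (measurable_snd.fst)).symm.memLp_snd hY3)
  have hZ3' : ∀ i, MemLp (Z i) 3 μ := fun i =>
    (((hident i).comp (measurable_snd.snd)).symm.memLp_snd hZ3)
  -- integrability of products
  have h32 : (1:ℝ≥0∞)/(3/2) = 1/3 + 1/3 := by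
    rw [ENNReal.div_add_div_same, one_div, ENNReal.inv_div (by norm_num) (by norm_num)]
    norm_num
  have h123 : (1:ℝ≥0∞)/1 = 1/(3/2) + 1/3 := by
    rw [one_div (3/2 : ℝ≥0∞), ENNReal.inv_div (by norm_num) (by norm_num),
      ENNReal.div_add_div_same]
    norm_num
    rw [ENNReal.div_self (by norm_num) (by norm_num)]
  have hMem2 : ∀ f g : Ω → ℝ, MemLp f 3 μ → MemLp g 3 μ →
      MemLp (fun ω => f ω * g ω) (3/2) μ := by
    intro f g hf hg
    simpa [smul_eq_mul, Pi.mul_def] using hg.smul hf (hpqr := ⟨by simpa only [one_div] using h32.symm⟩)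
  have hIntP : ∀ j k l, Integrable (fun ω => X j ω * Y k ω * Z l ω) μ := by
    intro j k l
    have := (hZ3' l).smul (hMem2 _ _ (hX3' j) (hY3' k)) (hpqr := ⟨by simpa only [one_div] using h123.symm⟩)
    rw [← memLp_one_iff_integrable]
    simpa [smul_eq_mul, Pi.mul_def] using this
  -- single moments
  have hEX : ∀ i, (∫ ω, X i ω ∂μ) = ∫ ω, X i0 ω ∂μ := fun i =>
    ((hident i).comp measurable_fst).integral_eq
  have hEY : ∀ i, (∫ ω, Y i ω ∂μ) = ∫ ω, Y i0 ω ∂μ := fun i =>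
    ((hident i).comp measurable_snd.fst).integral_eq
  have hEZ : ∀ i, (∫ ω, Z i ω ∂μ) = ∫ ω, Z i0 ω ∂μ := fun i =>
    ((hident i).comp measurable_snd.snd).integral_eq
  -- pair moments
  have hEXY : ∀ i, (∫ ω, X i ω * Y i ω ∂μ) = ∫ ω, X i0 ω * Y i0 ω ∂μ := fun i =>
    ((hident i).comp (measurable_fst.mul measurable_snd.fst)).integral_eq
  have hEXZ : ∀ i, (∫ ω, X i ω * Z i ω ∂μ) = ∫ ω, X i0 ω * Z i0 ω ∂μ := fun i =>
    ((hident i).comp (measurable_fst.mul measurable_snd.snd)).integral_eq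
  have hEYZ : ∀ i, (∫ ω, Y i ω * Z i ω ∂μ) = ∫ ω, Y i0 ω * Z i0 ω ∂μ := fun i =>
    ((hident i).comp (measurable_snd.fst.mul measurable_snd.snd)).integral_eq
  have hEXYZ : ∀ i, (∫ ω, X i ω * Y i ω * Z i ω ∂μ) = ∫ ω, X i0 ω * Y i0 ω * Z i0 ω ∂μ := fun i =>
    ((hident i).comp ((measurable_fst.mul measurable_snd.fst).mul measurable_snd.snd)).integral_eq
  -- abbreviations for the five moment constants
  set cA : ℝ := ∫ ω, X i0 ω * Y i0 ω * Z i0 ω ∂μ with hcA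
  set cB : ℝ := (∫ ω, X i0 ω * Y i0 ω ∂μ) * (∫ ω, Z i0 ω ∂μ) with hcB
  set cC : ℝ := (∫ ω, X i0 ω * Z i0 ω ∂μ) * (∫ ω, Y i0 ω ∂μ) with hcC
  set cD : ℝ := (∫ ω, Y i0 ω * Z i0 ω ∂μ) * (∫ ω, X i0 ω ∂μ) with hcD
  set cE : ℝ := (∫ ω, X i0 ω ∂μ) * (∫ ω, Y i0 ω ∂μ) * (∫ ω, Z i0 ω ∂μ) with hcE
  -- the pattern lemma for triple moments
  have hM : ∀ j k l, (∫ ω, X j ω * Y k ω * Z l ω ∂μ)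
      = if j = k then (if j = l then cA else cB)
        else if j = l then cC else if k = l then cD else cE := by
    intro j k l
    by_cases hjk : j = k
    · subst hjk
      by_cases hjl : j = l
      · subst hjl
        simp only [if_pos rfl]
        exact hEXYZ j
      · simp only [if_pos rfl, if_neg hjl]
        have hind : IndepFun (fun ω => X j ω * Y j ω) (Z l) μ :=
          (hindep.indepFun hjl).comp
            ((measurable_fst.mul measurable_snd.fst) : Measurable fun p : ℝ×ℝ×ℝ => p.1 * p.2.1)
            (measurable_snd.snd : Measurable fun p : ℝ×ℝ×ℝ => p.2.2)
        have := hind.integral_mul_eq_mul_integral ((hXmeas j).mul (hYmeas j)).aestronglyMeasurable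
          (hZmeas l).aestronglyMeasurable
        calc (∫ ω, X j ω * Y j ω * Z l ω ∂μ)
            = (∫ ω, X j ω * Y j ω ∂μ) * (∫ ω, Z l ω ∂μ) := this
          _ = cB := by rw [hEXY j, hEZ l]
    · by_cases hjl : j = l
      · subst hjl
        simp only [if_neg hjk, if_pos rfl]
        have e : (fun ω => X j ω * Y k ω * Z j ω) = fun ω => X j ω * Z j ω * Y k ω :=
          funext fun ω => by ring
        have hind : IndepFun (fun ω => X j ω * Z j ω) (Y k) μ :=
          (hindep.indepFun hjk).comp
            ((measurable_fst.mul measurable_snd.snd) : Measurable fun p : ℝ×ℝ×ℝ => p.1 * p.2.2)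
            (measurable_snd.fst : Measurable fun p : ℝ×ℝ×ℝ => p.2.1)
        have h2 := hind.integral_mul_eq_mul_integral ((hXmeas j).mul (hZmeas j)).aestronglyMeasurable
          (hYmeas k).aestronglyMeasurable
        calc (∫ ω, X j ω * Y k ω * Z j ω ∂μ)
            = ∫ ω, X j ω * Z j ω * Y k ω ∂μ := by rw [e]
          _ = (∫ ω, X j ω * Z j ω ∂μ) * (∫ ω, Y k ω ∂μ) := h2
          _ = cC := by rw [hEXZ j, hEY k]
      · by_cases hkl : k = l
        · subst hkl
          simp only [if_neg hjk, if_neg hjl, if_pos rfl]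
          have e : (fun ω => X j ω * Y k ω * Z k ω) = fun ω => (Y k ω * Z k ω) * X j ω :=
            funext fun ω => by ring
          have hind : IndepFun (fun ω => Y k ω * Z k ω) (X j) μ :=
            (hindep.indepFun (Ne.symm hjk)).comp
              ((measurable_snd.fst.mul measurable_snd.snd) :
                Measurable fun p : ℝ×ℝ×ℝ => p.2.1 * p.2.2)
              (measurable_fst : Measurable fun p : ℝ×ℝ×ℝ => p.1)
          have h2 := hind.integral_mul_eq_mul_integral ((hYmeas k).mul (hZmeas k)).aestronglyMeasurable
            (hXmeas j).aestronglyMeasurable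
          calc (∫ ω, X j ω * Y k ω * Z k ω ∂μ)
              = ∫ ω, (Y k ω * Z k ω) * X j ω ∂μ := by rw [e]
            _ = (∫ ω, Y k ω * Z k ω ∂μ) * (∫ ω, X j ω ∂μ) := h2
            _ = cD := by rw [hEYZ k, hEX j]
        · simp only [if_neg hjk, if_neg hjl, if_neg hkl]
          have hind3 : IndepFun (fun ω => (V j ω, V k ω)) (V l) μ :=
            hindep.indepFun_prodMk hVmeas j k l hjl hkl
          have hind : IndepFun (fun ω => X j ω * Y k ω) (Z l) μ :=
            hind3.comp
              ((measurable_fst.fst.mul measurable_snd.snd.fst) :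
                Measurable fun p : (ℝ×ℝ×ℝ)×(ℝ×ℝ×ℝ) => p.1.1 * p.2.2.1)
              (measurable_snd.snd : Measurable fun p : ℝ×ℝ×ℝ => p.2.2)
          have h2 := hind.integral_mul_eq_mul_integral ((hXmeas j).mul (hYmeas k)).aestronglyMeasurable
            (hZmeas l).aestronglyMeasurable
          have hind2 : IndepFun (X j) (Y k) μ :=
            (hindep.indepFun hjk).comp
              (measurable_fst : Measurable fun p : ℝ×ℝ×ℝ => p.1)
              (measurable_snd.fst : Measurable fun p : ℝ×ℝ×ℝ => p.2.1)
          have h3 := hind2.integral_mul_eq_mul_integral (hXmeas j).aestronglyMeasurable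
            (hYmeas k).aestronglyMeasurable
          calc (∫ ω, X j ω * Y k ω * Z l ω ∂μ)
              = (∫ ω, X j ω * Y k ω ∂μ) * (∫ ω, Z l ω ∂μ) := h2
            _ = (∫ ω, X j ω ∂μ) * (∫ ω, Y k ω ∂μ) * (∫ ω, Z l ω ∂μ) := congrArg (· * (∫ ω, Z l ω ∂μ)) h3
            _ = cE := by rw [hEX j, hEY k, hEZ l]
  -- integrability of the three aggregate terms
  have hIntP2 : ∀ j k : Fin m, Integrable
      (fun ω => X j ω * Y j ω * Z k ω + X j ω * Y k ω * Z j ω) μ :=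
    fun j k => (hIntP j j k).add (hIntP j k j)
  have hIntP3 : ∀ j k : Fin m, Integrable
      (fun ω => X j ω * Y j ω * Z k ω + X j ω * Y k ω * Z j ω + X k ω * Y j ω * Z j ω) μ :=
    fun j k => (hIntP2 j k).add (hIntP k j j)
  have intS1 : Integrable (fun ω => ∑ j, X j ω * Y j ω * Z j ω) μ :=
    integrable_finset_sum _ fun j _ => hIntP j j j
  have intD : Integrable (fun ω => ∑ j, ∑ k,
      (X j ω * Y j ω * Z k ω + X j ω * Y k ω * Z j ω + X k ω * Y j ω * Z j ω)) μ :=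
    integrable_finset_sum _ fun j _ => integrable_finset_sum _ fun k _ => hIntP3 j k
  have intT : Integrable (fun ω => ∑ j, ∑ k, ∑ l, X j ω * Y k ω * Z l ω) μ :=
    integrable_finset_sum _ fun j _ => integrable_finset_sum _ fun k _ =>
      integrable_finset_sum _ fun l _ => hIntP j k l
  -- value of the diagonal sum
  have hS1 : (∫ ω, ∑ j, X j ω * Y j ω * Z j ω ∂μ) = (m:ℝ) * cA := by
    rw [integral_finset_sum _ fun j _ => hIntP j j j]
    have h : ∀ j : Fin m, (∫ ω, X j ω * Y j ω * Z j ω ∂μ) = cA := fun j => by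
      simpa using hM j j j
    rw [Finset.sum_congr rfl fun j _ => h j, Finset.sum_const, Finset.card_univ,
      Fintype.card_fin, nsmul_eq_mul]
  -- value of the double sum
  have hDv : (∫ ω, ∑ j, ∑ k,
      (X j ω * Y j ω * Z k ω + X j ω * Y k ω * Z j ω + X k ω * Y j ω * Z j ω) ∂μ)
      = (m:ℝ) * (3*cA + ((m:ℝ)-1)*(cB + cC + cD)) := by
    have term : ∀ j k : Fin m,
        (∫ ω, (X j ω * Y j ω * Z k ω + X j ω * Y k ω * Z j ω + X k ω * Y j ω * Z j ω) ∂μ)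
        = if j = k then 3*cA else cB + cC + cD := by
      intro j k
      rw [integral_add (hIntP2 j k) (hIntP k j j),
        integral_add (hIntP j j k) (hIntP j k j), hM j j k, hM j k j, hM k j j]
      by_cases hjk : j = k
      · subst hjk; simp only [eq_self_iff_true, if_true]; ring
      · simp only [if_neg hjk, if_neg (Ne.symm hjk), eq_self_iff_true, if_true]
    have inner : ∀ j : Fin m, (∫ ω, ∑ k,
        (X j ω * Y j ω * Z k ω + X j ω * Y k ω * Z j ω + X k ω * Y j ω * Z j ω) ∂μ)
        = 3*cA + ((m:ℝ)-1)*(cB + cC + cD) := by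
      intro j
      rw [integral_finset_sum _ fun k _ => hIntP3 j k,
        Finset.sum_congr rfl fun k _ => term j k]
      exact sum_ite_one j _ _
    rw [integral_finset_sum _ fun j _ => integrable_finset_sum _ fun k _ => hIntP3 j k,
      Finset.sum_congr rfl fun j _ => inner j, Finset.sum_const, Finset.card_univ,
      Fintype.card_fin, nsmul_eq_mul]
  -- value of the triple sum
  have hTv : (∫ ω, ∑ j, ∑ k, ∑ l, X j ω * Y k ω * Z l ω ∂μ)
      = (m:ℝ) * ((cA + ((m:ℝ)-1)*cB) + ((m:ℝ)-1)*(cC + cD + ((m:ℝ)-2)*cE)) := by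
    have innerL : ∀ j k : Fin m, (∫ ω, ∑ l, X j ω * Y k ω * Z l ω ∂μ)
        = if j = k then cA + ((m:ℝ)-1)*cB else cC + cD + ((m:ℝ)-2)*cE := by
      intro j k
      rw [integral_finset_sum _ fun l _ => hIntP j k l,
        Finset.sum_congr rfl fun l _ => hM j k l]
      by_cases hjk : j = k
      · subst hjk
        simp only [if_pos rfl]
        exact sum_ite_one j cA cB
      · simp only [if_neg hjk]
        exact sum_ite_two hjk cC cD cE
    have innerK : ∀ j : Fin m, (∫ ω, ∑ k, ∑ l, X j ω * Y k ω * Z l ω ∂μ)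
        = (cA + ((m:ℝ)-1)*cB) + ((m:ℝ)-1)*(cC + cD + ((m:ℝ)-2)*cE) := by
      intro j
      rw [integral_finset_sum _ fun k _ => integrable_finset_sum _ fun l _ => hIntP j k l,
        Finset.sum_congr rfl fun k _ => innerL j k]
      exact sum_ite_one j _ _
    rw [integral_finset_sum _ fun j _ => integrable_finset_sum _ fun k _ =>
        integrable_finset_sum _ fun l _ => hIntP j k l,
      Finset.sum_congr rfl fun j _ => innerK j, Finset.sum_const, Finset.card_univ,
      Fintype.card_fin, nsmul_eq_mul]
  -- now assemble
  rw [MeasureTheory.integral_const_mul, MeasureTheory.integral_const_mul]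
  have hkey : (∫ ω, (∑ j, (X j ω - (m:ℝ)⁻¹ * ∑ i, X i ω) * (Y j ω - (m:ℝ)⁻¹ * ∑ i, Y i ω)
        * (Z j ω - (m:ℝ)⁻¹ * ∑ i, Z i ω)) ∂μ)
      = ∫ ω, ((∑ j, X j ω * Y j ω * Z j ω)
          - (m:ℝ)⁻¹ * (∑ j, ∑ k, (X j ω * Y j ω * Z k ω + X j ω * Y k ω * Z j ω
              + X k ω * Y j ω * Z j ω))
          + 2 * ((m:ℝ)⁻¹)^2 * (∑ j, ∑ k, ∑ l, X j ω * Y k ω * Z l ω)) ∂μ :=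
    integral_congr_ae (Filter.Eventually.of_forall fun ω =>
      key_sum hm0 (fun i => X i ω) (fun i => Y i ω) (fun i => Z i ω))
  have iD' : Integrable (fun ω => (m:ℝ)⁻¹ * ∑ j, ∑ k,
      (X j ω * Y j ω * Z k ω + X j ω * Y k ω * Z j ω + X k ω * Y j ω * Z j ω)) μ :=
    intD.const_mul _
  have iT' : Integrable (fun ω => 2 * ((m:ℝ)⁻¹)^2 * ∑ j, ∑ k, ∑ l, X j ω * Y k ω * Z l ω) μ :=
    intT.const_mul _
  have i1 : Integrable (fun ω => (∑ j, X j ω * Y j ω * Z j ω) - (m:ℝ)⁻¹ * ∑ j, ∑ k,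
      (X j ω * Y j ω * Z k ω + X j ω * Y k ω * Z j ω + X k ω * Y j ω * Z j ω)) μ :=
    intS1.sub iD'
  rw [hkey, integral_add i1 iT', integral_sub intS1 iD', MeasureTheory.integral_const_mul,
    MeasureTheory.integral_const_mul, hS1, hDv, hTv, hcE]
  field_simp
  ring
end

section
/- Let m ≥ 2 and suppose 𝔼[X] = 0. Then the reduced estimator c₃⁽ᵉ⁾ = ((m+1)·\overline{XYZ} − m(\overline{XY}·Z̄ + \overline{XZ}·Ȳ))/(m−1) satisfies 𝔼[c₃⁽ᵉ⁾] = 𝔼[XYZ] − 𝔼[XY]𝔼[Z] − 𝔼[XZ]𝔼[Y], which under the hypothesis 𝔼[X]=0 equals the third multivariate cumulant C₃(x,y,z). -/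
open MeasureTheory ProbabilityTheory
open scoped ENNReal

theorem unbiased_c3_e {Ω : Type*} [MeasurableSpace Ω] (μ : Measure Ω) [IsProbabilityMeasure μ]
    (m : ℕ) (hm : 2 ≤ m)
    (X Y Z : Fin m → Ω → ℝ)
    (hXmeas : ∀ i, Measurable (X i))
    (hYmeas : ∀ i, Measurable (Y i))
    (hZmeas : ∀ i, Measurable (Z i))
    (hindep : iIndepFun (fun i ω => (X i ω, Y i ω, Z i ω)) μ)
    (hident : ∀ i, IdentDistrib (fun ω => (X i ω, Y i ω, Z i ω)) (fun ω => (X ⟨0, by omega⟩ ω, Y ⟨0, by omega⟩ ω, Z ⟨0, by omega⟩ ω)) μ μ)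
    (hX3 : MemLp (X ⟨0, by omega⟩) 3 μ)
    (hY3 : MemLp (Y ⟨0, by omega⟩) 3 μ)
    (hZ3 : MemLp (Z ⟨0, by omega⟩) 3 μ)
    (hEX : (∫ ω, X ⟨0, by omega⟩ ω ∂μ) = 0) :
    (∫ ω, (((m:ℝ)+1) * ((m:ℝ)⁻¹ * ∑ i, X i ω * Y i ω * Z i ω) - (m:ℝ) * (((m:ℝ)⁻¹ * ∑ i, X i ω * Y i ω) * ((m:ℝ)⁻¹ * ∑ i, Z i ω) + ((m:ℝ)⁻¹ * ∑ i, X i ω * Z i ω) * ((m:ℝ)⁻¹ * ∑ i, Y i ω))) / ((m:ℝ)-1) ∂μ) = (∫ ω, X ⟨0, by omega⟩ ω * Y ⟨0, by omega⟩ ω * Z ⟨0, by omega⟩ ω ∂μ) - (∫ ω, X ⟨0, by omega⟩ ω * Y ⟨0, by omega⟩ ω ∂μ) * (∫ ω, Z ⟨0, by omega⟩ ω ∂μ) - (∫ ω, X ⟨0, by omega⟩ ω * Z ⟨0, by omega⟩ ω ∂μ) * (∫ ω, Y ⟨0, by omega⟩ ω ∂μ) ∧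
    (∫ ω, X ⟨0, by omega⟩ ω * Y ⟨0, by omega⟩ ω * Z ⟨0, by omega⟩ ω ∂μ) - (∫ ω, X ⟨0, by omega⟩ ω * Y ⟨0, by omega⟩ ω ∂μ) * (∫ ω, Z ⟨0, by omega⟩ ω ∂μ) - (∫ ω, X ⟨0, by omega⟩ ω * Z ⟨0, by omega⟩ ω ∂μ) * (∫ ω, Y ⟨0, by omega⟩ ω ∂μ) = (∫ ω, X ⟨0, by omega⟩ ω * Y ⟨0, by omega⟩ ω * Z ⟨0, by omega⟩ ω ∂μ) - (∫ ω, X ⟨0, by omega⟩ ω * Y ⟨0, by omega⟩ ω ∂μ) * (∫ ω, Z ⟨0, by omega⟩ ω ∂μ) - (∫ ω, X ⟨0, by omega⟩ ω * Z ⟨0, by omega⟩ ω ∂μ) * (∫ ω, Y ⟨0, by omega⟩ ω ∂μ) - (∫ ω, Y ⟨0, by omega⟩ ω * Z ⟨0, by omega⟩ ω ∂μ) * (∫ ω, X ⟨0, by omega⟩ ω ∂μ) + 2 * (∫ ω, X ⟨0, by omega⟩ ω ∂μ) * (∫ ω, Y ⟨0, by omega⟩ ω ∂μ) * (∫ ω,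 Z ⟨0, by omega⟩ ω ∂μ) := by
  have hm0 : (0:ℕ) < m := by omega
  have hEX' : (∫ ω, X ⟨0, hm0⟩ ω ∂μ) = 0 := hEX
  constructor
  · -- main part
    show _ = (∫ ω, X (⟨0, hm0⟩ : Fin m) ω * Y ⟨0, hm0⟩ ω * Z ⟨0, hm0⟩ ω ∂μ) - (∫ ω, X (⟨0, hm0⟩ : Fin m) ω * Y ⟨0, hm0⟩ ω ∂μ) * (∫ ω, Z (⟨0, hm0⟩ : Fin m) ω ∂μ) - (∫ ω, X (⟨0, hm0⟩ : Fin m) ω * Z ⟨0, hm0⟩ ω ∂μ) * (∫ ω, Y (⟨0, hm0⟩ : Fin m) ω ∂μ)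
    have hmne : (m:ℝ) ≠ 0 := by
      have : (0:ℝ) < m := by exact_mod_cast hm0
      linarith
    have hm1ne : (m:ℝ) - 1 ≠ 0 := by
      have : (2:ℝ) ≤ m := by exact_mod_cast hm
      linarith
    set i0 : Fin m := ⟨0, hm0⟩ with hi0def
    set a := ∫ ω, X i0 ω * Y i0 ω * Z i0 ω ∂μ with ha
    set b := ∫ ω, X i0 ω * Y i0 ω ∂μ with hb
    set c := ∫ ω, Z i0 ω ∂μ with hc
    set d := ∫ ω, X i0 ω * Z i0 ω ∂μ with hd
    set f := ∫ ω, Y i0 ω ∂μ with hf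
    -- measurable maps on ℝ×ℝ×ℝ
    have hgXYZ : Measurable (fun p : ℝ×ℝ×ℝ => p.1 * p.2.1 * p.2.2) := by fun_prop
    have hgXY : Measurable (fun p : ℝ×ℝ×ℝ => p.1 * p.2.1) := by fun_prop
    have hgXZ : Measurable (fun p : ℝ×ℝ×ℝ => p.1 * p.2.2) := by fun_prop
    have hgY : Measurable (fun p : ℝ×ℝ×ℝ => p.2.1) := by fun_prop
    have hgZ : Measurable (fun p : ℝ×ℝ×ℝ => p.2.2) := by fun_prop
    have hgX : Measurable (fun p : ℝ×ℝ×ℝ => p.1) := by fun_prop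
    -- identically distributed components
    have hidX : ∀ i, IdentDistrib (X i) (X i0) μ μ := fun i => (hident i).comp hgX
    have hidY : ∀ i, IdentDistrib (Y i) (Y i0) μ μ := fun i => (hident i).comp hgY
    have hidZ : ∀ i, IdentDistrib (Z i) (Z i0) μ μ := fun i => (hident i).comp hgZ
    have hidXY : ∀ i, IdentDistrib (fun ω => X i ω * Y i ω) (fun ω => X i0 ω * Y i0 ω) μ μ :=
      fun i => (hident i).comp hgXY
    have hidXZ : ∀ i, IdentDistrib (fun ω => X i ω * Z i ω) (fun ω => X i0 ω * Z i0 ω) μ μ :=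
      fun i => (hident i).comp hgXZ
    have hidXYZ : ∀ i, IdentDistrib (fun ω => X i ω * Y i ω * Z i ω)
        (fun ω => X i0 ω * Y i0 ω * Z i0 ω) μ μ := fun i => (hident i).comp hgXYZ
    -- MemLp for all indices
    have hX3' : ∀ i, MemLp (X i) 3 μ := fun i => (hidX i).memLp_iff.mpr hX3
    have hY3' : ∀ i, MemLp (Y i) 3 μ := fun i => (hidY i).memLp_iff.mpr hY3
    have hZ3' : ∀ i, MemLp (Z i) 3 μ := fun i => (hidZ i).memLp_iff.mpr hZ3
    have h32 : (1:ℝ≥0∞)/(3/2) = 1/3 + 1/3 := by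
      rw [ENNReal.div_add_div_same, one_div, ENNReal.inv_div (by norm_num) (by norm_num)]
      norm_num
    have h11 : (1:ℝ≥0∞)/1 = 1/(3/2) + 1/3 := by
      rw [one_div, one_div, ENNReal.inv_div (by norm_num) (by norm_num), ENNReal.div_add_div_same,
        show (2:ℝ≥0∞)+1 = 3 by norm_num, ENNReal.div_self (by norm_num) (by norm_num)]
      norm_num
    have hXY32 : ∀ i, MemLp (fun ω => X i ω * Y i ω) (3/2) μ :=
      fun i => (hY3' i).smul (hX3' i) (hpqr := ⟨by simpa only [one_div] using h32.symm⟩)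
    have hXZ32 : ∀ i, MemLp (fun ω => X i ω * Z i ω) (3/2) μ :=
      fun i => (hZ3' i).smul (hX3' i) (hpqr := ⟨by simpa only [one_div] using h32.symm⟩)
    have I1 : ∀ i, Integrable (fun ω => X i ω * Y i ω * Z i ω) μ := fun i =>
      memLp_one_iff_integrable.mp ((hZ3' i).smul (hXY32 i) (hpqr := ⟨by simpa only [one_div] using h11.symm⟩))
    have I1' : ∀ i, Integrable (fun ω => X i ω * Z i ω * Y i ω) μ := fun i => by
      have := I1 i
      simpa [mul_right_comm] using this
    have h132 : (1:ℝ≥0∞) ≤ 3/2 := by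
      rw [ENNReal.le_div_iff_mul_le (by norm_num) (by norm_num)]
      norm_num
    have I2 : ∀ i, Integrable (fun ω => X i ω * Y i ω) μ := fun i =>
      (hXY32 i).integrable h132
    have I3 : ∀ i, Integrable (fun ω => X i ω * Z i ω) μ := fun i =>
      (hXZ32 i).integrable h132
    have IY : ∀ i, Integrable (Y i) μ := fun i => (hY3' i).integrable (by norm_num)
    have IZ : ∀ i, Integrable (Z i) μ := fun i => (hZ3' i).integrable (by norm_num)
    -- integral identities from identical distribution
    have EA : ∀ i, ∫ ω, X i ω * Y i ω * Z i ω ∂μ = a := fun i => (hidXYZ i).integral_eq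
    have EB : ∀ i, ∫ ω, X i ω * Y i ω ∂μ = b := fun i => (hidXY i).integral_eq
    have ED : ∀ i, ∫ ω, X i ω * Z i ω ∂μ = d := fun i => (hidXZ i).integral_eq
    have EY : ∀ i, ∫ ω, Y i ω ∂μ = f := fun i => (hidY i).integral_eq
    have EZ : ∀ i, ∫ ω, Z i ω ∂μ = c := fun i => (hidZ i).integral_eq
    -- independence of cross terms
    have hInd1 : ∀ i j, i ≠ j → IndepFun (fun ω => X i ω * Y i ω) (Z j) μ :=
      fun i j hij => (hindep.indepFun hij).comp hgXY hgZ
    have hInd2 : ∀ i j, i ≠ j → IndepFun (fun ω => X i ω * Z i ω) (Y j) μ :=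
      fun i j hij => (hindep.indepFun hij).comp hgXZ hgY
    have cross1 : ∀ i j, i ≠ j → ∫ ω, X i ω * Y i ω * Z j ω ∂μ = b * c := by
      intro i j hij
      have h := (hInd1 i j hij).integral_mul_eq_mul_integral (I2 i).aestronglyMeasurable
        (IZ j).aestronglyMeasurable
      calc ∫ ω, X i ω * Y i ω * Z j ω ∂μ
          = (∫ ω, X i ω * Y i ω ∂μ) * ∫ ω, Z j ω ∂μ := h
        _ = b * c := by rw [EB i, EZ j]
    have cross2 : ∀ i j, i ≠ j → ∫ ω, X i ω * Z i ω * Y j ω ∂μ = d * f := by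
      intro i j hij
      have h := (hInd2 i j hij).integral_mul_eq_mul_integral (I3 i).aestronglyMeasurable
        (IY j).aestronglyMeasurable
      calc ∫ ω, X i ω * Z i ω * Y j ω ∂μ
          = (∫ ω, X i ω * Z i ω ∂μ) * ∫ ω, Y j ω ∂μ := h
        _ = d * f := by rw [ED i, EY j]
    have crossInt1 : ∀ i j, Integrable (fun ω => X i ω * Y i ω * Z j ω) μ := by
      intro i j
      by_cases hij : i = j
      · subst hij; exact I1 i
      · exact (hInd1 i j hij).integrable_mul (I2 i) (IZ j)
    have crossInt2 : ∀ i j, Integrable (fun ω => X i ω * Z i ω * Y j ω) μ := by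
      intro i j
      by_cases hij : i = j
      · subst hij; exact I1' i
      · exact (hInd2 i j hij).integrable_mul (I3 i) (IY j)
    have hcast : ((m - 1 : ℕ) : ℝ) = (m:ℝ) - 1 := by
      rw [Nat.cast_sub (by omega)]; norm_num
    -- integral of the diagonal sum
    have hS1 : ∫ ω, ∑ i, X i ω * Y i ω * Z i ω ∂μ = m * a := by
      rw [integral_finset_sum _ (fun i _ => I1 i)]
      rw [Finset.sum_congr rfl (fun i _ => EA i), Finset.sum_const, Finset.card_univ,
        Fintype.card_fin, nsmul_eq_mul]
    -- integrals of double sums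
    have hrow1 : ∀ i : Fin m, ∫ ω, ∑ j, X i ω * Y i ω * Z j ω ∂μ = a + ((m:ℝ)-1) * (b*c) := by
      intro i
      rw [integral_finset_sum _ (fun j _ => crossInt1 i j)]
      rw [← Finset.sum_erase_add _ _ (Finset.mem_univ i), EA i]
      rw [Finset.sum_congr rfl (fun j hj => cross1 i j (Finset.ne_of_mem_erase hj).symm)]
      rw [Finset.sum_const, Finset.card_erase_of_mem (Finset.mem_univ i), Finset.card_univ,
        Fintype.card_fin, nsmul_eq_mul, hcast]
      ring
    have hrow2 : ∀ i : Fin m, ∫ ω, ∑ j, X i ω * Z i ω * Y j ω ∂μ = a + ((m:ℝ)-1) * (d*f) := by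
      intro i
      rw [integral_finset_sum _ (fun j _ => crossInt2 i j)]
      rw [← Finset.sum_erase_add _ _ (Finset.mem_univ i)]
      have : ∫ ω, X i ω * Z i ω * Y i ω ∂μ = a := by
        rw [← EA i]
        congr 1; funext ω; ring
      rw [this]
      rw [Finset.sum_congr rfl (fun j hj => cross2 i j (Finset.ne_of_mem_erase hj).symm)]
      rw [Finset.sum_const, Finset.card_erase_of_mem (Finset.mem_univ i), Finset.card_univ,
        Fintype.card_fin, nsmul_eq_mul, hcast]
      ring
    have hT1 : ∫ ω, ∑ i, ∑ j, X i ω * Y i ω * Z j ω ∂μ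
        = (m:ℝ) * (a + ((m:ℝ)-1) * (b*c)) := by
      rw [integral_finset_sum _ (fun i _ => integrable_finset_sum _ (fun j _ => crossInt1 i j))]
      rw [Finset.sum_congr rfl (fun i _ => hrow1 i), Finset.sum_const, Finset.card_univ,
        Fintype.card_fin, nsmul_eq_mul]
    have hT2 : ∫ ω, ∑ i, ∑ j, X i ω * Z i ω * Y j ω ∂μ
        = (m:ℝ) * (a + ((m:ℝ)-1) * (d*f)) := by
      rw [integral_finset_sum _ (fun i _ => integrable_finset_sum _ (fun j _ => crossInt2 i j))]
      rw [Finset.sum_congr rfl (fun i _ => hrow2 i), Finset.sum_const, Finset.card_univ,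
        Fintype.card_fin, nsmul_eq_mul]
    -- rewrite the integrand as a linear combination
    have hrep : (fun ω => (((m:ℝ)+1) * ((m:ℝ)⁻¹ * ∑ i, X i ω * Y i ω * Z i ω) - (m:ℝ) * (((m:ℝ)⁻¹ * ∑ i, X i ω * Y i ω) * ((m:ℝ)⁻¹ * ∑ i, Z i ω) + ((m:ℝ)⁻¹ * ∑ i, X i ω * Z i ω) * ((m:ℝ)⁻¹ * ∑ i, Y i ω))) / ((m:ℝ)-1))
        = fun ω => (((m:ℝ)+1)/((m:ℝ)*((m:ℝ)-1))) * (∑ i, X i ω * Y i ω * Z i ω)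
          - (1/((m:ℝ)*((m:ℝ)-1))) * (∑ i, ∑ j, X i ω * Y i ω * Z j ω)
          - (1/((m:ℝ)*((m:ℝ)-1))) * (∑ i, ∑ j, X i ω * Z i ω * Y j ω) := by
      funext ω
      rw [show (∑ i, ∑ j, X i ω * Y i ω * Z j ω)
          = (∑ i, X i ω * Y i ω) * (∑ j, Z j ω) from (Finset.sum_mul_sum _ _ _ _).symm]
      rw [show (∑ i, ∑ j, X i ω * Z i ω * Y j ω)
          = (∑ i, X i ω * Z i ω) * (∑ j, Y j ω) from (Finset.sum_mul_sum _ _ _ _).symm]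
      field_simp
      ring
    rw [hrep]
    have int1 : Integrable (fun ω => (((m:ℝ)+1)/((m:ℝ)*((m:ℝ)-1))) * (∑ i, X i ω * Y i ω * Z i ω)) μ :=
      (integrable_finset_sum _ (fun i _ => I1 i)).const_mul _
    have int2 : Integrable (fun ω => (1/((m:ℝ)*((m:ℝ)-1))) * (∑ i, ∑ j, X i ω * Y i ω * Z j ω)) μ :=
      (integrable_finset_sum _ (fun i _ => integrable_finset_sum _ (fun j _ => crossInt1 i j))).const_mul _
    have int3 : Integrable (fun ω => (1/((m:ℝ)*((m:ℝ)-1))) * (∑ i, ∑ j, X i ω * Z i ω * Y j ω)) μ :=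
      (integrable_finset_sum _ (fun i _ => integrable_finset_sum _ (fun j _ => crossInt2 i j))).const_mul _
    have int12 : Integrable (fun ω => (((m:ℝ)+1)/((m:ℝ)*((m:ℝ)-1))) * (∑ i, X i ω * Y i ω * Z i ω)
        - (1/((m:ℝ)*((m:ℝ)-1))) * (∑ i, ∑ j, X i ω * Y i ω * Z j ω)) μ := int1.sub int2
    rw [integral_sub int12 int3, integral_sub int1 int2,
      integral_const_mul, integral_const_mul, integral_const_mul, hS1, hT1, hT2]
    field_simp
    ring
  · show (∫ ω, X (⟨0, hm0⟩ : Fin m) ω * Y ⟨0, hm0⟩ ω * Z ⟨0, hm0⟩ ω ∂μ) - (∫ ω, X (⟨0, hm0⟩ : Fin m) ω * Y ⟨0, hm0⟩ ω ∂μ) * (∫ ω, Z (⟨0, hm0⟩ : Fin m) ω ∂μ) - (∫ ω, X (⟨0, hm0⟩ : Fin m) ω * Z ⟨0, hm0⟩ ω ∂μ) * (∫ ω, Y (⟨0, hm0⟩ : Fin m) ω ∂μ) = (∫ ω, X (⟨0, hm0⟩ : Fin m) ω * Y ⟨0, hm0⟩ ω * Z ⟨0, hm0⟩ ω ∂μ)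 - (∫ ω, X (⟨0, hm0⟩ : Fin m) ω * Y ⟨0, hm0⟩ ω ∂μ) * (∫ ω, Z (⟨0, hm0⟩ : Fin m) ω ∂μ) - (∫ ω, X (⟨0, hm0⟩ : Fin m) ω * Z ⟨0, hm0⟩ ω ∂μ) * (∫ ω, Y (⟨0, hm0⟩ : Fin m) ω ∂μ) - (∫ ω, Y (⟨0, hm0⟩ : Fin m) ω * Z ⟨0, hm0⟩ ω ∂μ) * (∫ ω, X (⟨0, hm0⟩ : Fin m) ω ∂μ) + 2 * (∫ ω, X (⟨0, hm0⟩ : Fin m) ω ∂μ) * (∫ ω, Y (⟨0, hm0⟩ : Fin m) ω ∂μ) * (∫ ω, Z (⟨0, hm0⟩ : Fin m) ω ∂μ)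
    rw [hEX']; ring
end

section
/- Let m ≥ 1 and suppose 𝔼[X] = 0. Then the Gauss-optimal third-order estimator c₃⁽ᶜ'ᴳᵒ⁾ = ( (m+4)·\overline{X³} − 3m·\overline{X²}·X̄ ) / (m+1) (equivalently \overline{X³} − (3/(m(m+1)))·∑_{i≠j} Xᵢ²Xⱼ) is an unbiased estimator of the third cumulant: 𝔼[c₃⁽ᶜ'ᴳᵒ⁾] = 𝔼[X³]. -/
open MeasureTheory ProbabilityTheory
open scoped ENNReal

lemma memℒp_cube_integrable {Ω : Type*} [MeasurableSpace Ω] {μ : Measure Ω}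
    [IsProbabilityMeasure μ] {f : Ω → ℝ} (hf : Measurable f) (h : MemLp f 3 μ) :
    Integrable (fun ω => f ω ^ 3) μ := by
  have h1 := h.integrable_norm_rpow (by norm_num) (by norm_num)
  have h2 : ((3 : ℝ≥0∞)).toReal = (3 : ℝ) := by norm_num
  rw [h2] at h1
  refine (Integrable.mono' h1 ((hf.pow_const 3).aestronglyMeasurable) ?_)
  filter_upwards with ω
  rw [Real.norm_eq_abs, abs_pow, Real.norm_eq_abs]
  rw [← Real.rpow_natCast |f ω| 3]
  norm_num

theorem unbiased_c3_Go {Ω : Type*} [MeasurableSpace Ω] (μ : Measure Ω) [IsProbabilityMeasure μ]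
    (m : ℕ) (hm : 1 ≤ m)
    (X : Fin m → Ω → ℝ)
    (hXmeas : ∀ i, Measurable (X i))
    (hindep : iIndepFun X μ)
    (hident : ∀ i, IdentDistrib (X i) (X ⟨0, by omega⟩) μ μ)
    (hX : MemLp (X ⟨0, by omega⟩) 3 μ)
    (hEX : (∫ ω, X ⟨0, by omega⟩ ω ∂μ) = 0) :
    (∫ ω, (((m:ℝ)+4) * ((m:ℝ)⁻¹ * ∑ i, (X i ω)^3) - 3 * (m:ℝ) * ((m:ℝ)⁻¹ * ∑ i, (X i ω)^2) * ((m:ℝ)⁻¹ * ∑ i, X i ω)) / ((m:ℝ)+1) ∂μ) = (∫ ω, X ⟨0, by omega⟩ ω^3 ∂μ) := by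
  set X0 : Ω → ℝ := X ⟨0, by omega⟩ with hX0
  -- basic facts for each i
  have hLp : ∀ i, MemLp (X i) 3 μ := fun i => (hident i).symm.memLp_snd hX
  have hInt3 : ∀ i, Integrable (fun ω => X i ω ^ 3) μ := fun i =>
    memℒp_cube_integrable (hXmeas i) (hLp i)
  have hInt2 : ∀ i, Integrable (fun ω => X i ω ^ 2) μ := fun i =>
    ((hLp i).mono_exponent (by norm_num)).integrable_sq
  have hInt1 : ∀ i, Integrable (X i) μ := fun i =>
    ((hLp i).mono_exponent (by norm_num)).integrable le_rfl
  set M3 : ℝ := ∫ ω, X0 ω ^ 3 ∂μ with hM3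
  have hEq3 : ∀ i, (∫ ω, X i ω ^ 3 ∂μ) = M3 := by
    intro i
    exact ((hident i).comp (measurable_id.pow_const 3)).integral_eq
  have hEq1 : ∀ i, (∫ ω, X i ω ∂μ) = 0 := by
    intro i
    rw [← hEX]
    exact (hident i).integral_eq
  -- cross terms
  have hIndep2 : ∀ i j, i ≠ j → IndepFun (fun ω => X i ω ^ 2) (X j) μ := by
    intro i j hij
    exact (hindep.indepFun hij).comp (measurable_id.pow_const 2) measurable_id
  have hIntMul : ∀ i j, Integrable (fun ω => X i ω ^ 2 * X j ω) μ := by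
    intro i j
    rcases eq_or_ne i j with rfl | hij
    · simpa [pow_succ] using hInt3 i
    · exact (hIndep2 i j hij).integrable_mul (hInt2 i) (hInt1 j)
  have hCross : ∀ i j, (∫ ω, X i ω ^ 2 * X j ω ∂μ) = if i = j then M3 else 0 := by
    intro i j
    rcases eq_or_ne i j with rfl | hij
    · rw [if_pos rfl, ← hEq3 i]
      apply integral_congr_ae
      filter_upwards with ω
      ring
    · rw [if_neg hij]
      have := (hIndep2 i j hij).integral_fun_mul_eq_mul_integral (hInt2 i).aestronglyMeasurable
        (hInt1 j).aestronglyMeasurable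
      rw [hEq1 j, mul_zero] at this
      exact this
  -- rewrite integrand
  have hrw : ∀ ω, (((m:ℝ)+4) * ((m:ℝ)⁻¹ * ∑ i, (X i ω)^3)
      - 3 * (m:ℝ) * ((m:ℝ)⁻¹ * ∑ i, (X i ω)^2) * ((m:ℝ)⁻¹ * ∑ i, X i ω)) / ((m:ℝ)+1)
      = (((m:ℝ)+4) * (m:ℝ)⁻¹ / ((m:ℝ)+1)) * (∑ i, (X i ω)^3)
        - (3 * (m:ℝ)⁻¹ / ((m:ℝ)+1)) * (∑ i, ∑ j, (X i ω)^2 * X j ω) := by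
    intro ω
    have hsum : (∑ i, (X i ω)^2) * (∑ j, X j ω) = ∑ i, ∑ j, (X i ω)^2 * X j ω :=
      Finset.sum_mul_sum _ _ _ _
    rw [← hsum]
    have hm0 : (m:ℝ) ≠ 0 := by positivity
    field_simp
  simp only [hrw]
  -- integrability of the two pieces
  have hS3 : Integrable (fun ω => ∑ i, (X i ω)^3) μ := integrable_finset_sum _ fun i _ => hInt3 i
  have hSS : Integrable (fun ω => ∑ i, ∑ j, (X i ω)^2 * X j ω) μ :=
    integrable_finset_sum _ fun i _ => integrable_finset_sum _ fun j _ => hIntMul i j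
  rw [integral_sub (hS3.const_mul _) (hSS.const_mul _), integral_const_mul, integral_const_mul,
    integral_finset_sum _ fun i _ => hInt3 i,
    integral_finset_sum _ fun i _ => integrable_finset_sum _ fun j _ => hIntMul i j]
  have h1 : (∑ i : Fin m, ∫ ω, X i ω ^ 3 ∂μ) = m * M3 := by
    simp [hEq3, Finset.sum_const, Finset.card_univ]
  have h2 : (∑ i : Fin m, ∫ ω, ∑ j : Fin m, X i ω ^ 2 * X j ω ∂μ) = m * M3 := by
    have : ∀ i : Fin m, (∫ ω, ∑ j : Fin m, X i ω ^ 2 * X j ω ∂μ) = M3 := by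
      intro i
      rw [integral_finset_sum _ fun j _ => hIntMul i j,
        Finset.sum_congr rfl fun j _ => hCross i j]
      simp
    simp [this, Finset.sum_const, Finset.card_univ]
  rw [h1, h2]
  have hm0 : (m:ℝ) ≠ 0 := by positivity
  have hm1 : (m:ℝ) + 1 ≠ 0 := by positivity
  field_simp
  ring
end
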